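/- Let (V; M0,...,M4; c) be a Higmanian matrix configuration with valencies ni = c(i,i,0), and fix i ∈ {3,4}. Suppose c(3,3,3) = c(3,3,4) and (as rational numbers) n2/(n1+1) − 2·ni/n_{7−i} = 1. Then the matrix A = M2 + Mi is the adjacency matrix of a divisible design graph with class matrix P = N0 = M0+M1 and parameters v = 1+n1+n2+n3+n4, k = n2+ni, λ1 = n2 + ni·(n1·ni − n_{7−i})/(n1·(n3+n4)), λ2 = n2 − n1 − 1 + ni^2/(n3+n4), m = 1 + (n2+n3+n4)/(1+n1), n = 1+n1; in particular λ1, λ2 and m are nonnegative integers and A^2 = k•I + λ1•(N0−I) + λ2•(J−N0). -/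

import Mathlib

open Matrix Finset

/-- A *Higmanian matrix configuration* on a nonempty finite set `V`:
five nonzero symmetric `{0,1}`-matrices `M 0, …, M 4` over `ℤ` summing to the all-ones
matrix, with `M 0 = I`, structure constants `c`, parabolic conditions for
`N0 = M0 + M1` and `N1 = M0 + M1 + M2`, standard ordering `n3 ≤ n4`, and triviality of
the radicals of `M 3` and `M 4`. -/
structure HigmanianConfig (V : Type*) [Fintype V] [DecidableEq V] : Type _ where
  nonempty : Nonempty V
  M : Fin 5 → Matrix V V ℤ
  c : Fin 5 → Fin 5 → Fin 5 → ℕ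
  M_ne_zero : ∀ i, M i ≠ 0
  M_symm : ∀ i, (M i)ᵀ = M i
  M_entries : ∀ i x y, M i x y = 0 ∨ M i x y = 1
  M_zero : M 0 = 1
  sum_M : M 0 + M 1 + M 2 + M 3 + M 4 = Matrix.of fun _ _ => 1
  mul_M : ∀ i j, M i * M j = ∑ k : Fin 5, (c i j k : ℤ) • M k
  N0_sq : (M 0 + M 1) * (M 0 + M 1) = ((1 + c 1 1 0 : ℕ) : ℤ) • (M 0 + M 1)
  N1_sq : (M 0 + M 1 + M 2) * (M 0 + M 1 + M 2)
      = ((1 + c 1 1 0 + c 2 2 0 : ℕ) : ℤ) • (M 0 + M 1 + M 2)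
  N1_ne_J : M 0 + M 1 + M 2 ≠ Matrix.of fun _ _ => 1
  n3_le_n4 : c 3 3 0 ≤ c 4 4 0
  radical : ∀ j ∈ ({3, 4} : Finset (Fin 5)), ∀ T : Finset (Fin 5),
    T.Nonempty → T ⊆ ({1, 2, 3, 4} : Finset (Fin 5)) →
    ¬ ((1 + ∑ t ∈ T, M t) * (1 + ∑ t ∈ T, M t)
          = (1 + ∑ t ∈ T, (c t t 0 : ℤ)) • (1 + ∑ t ∈ T, M t)
        ∧ (1 + ∑ t ∈ T, M t) * M j = (1 + ∑ t ∈ T, (c t t 0 : ℤ)) • M j)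

/-- The valency `nᵢ = c i i 0` of the `i`-th basis matrix. -/
def HigmanianConfig.n {V : Type*} [Fintype V] [DecidableEq V]
    (X : HigmanianConfig V) (i : Fin 5) : ℕ := X.c i i 0

namespace HigmanianConfig
variable {V : Type*} [Fintype V] [DecidableEq V] (X : HigmanianConfig V)

/-- integer structure constants -/
def cz (i j k : Fin 5) : ℤ := (X.c i j k : ℤ)

/-- integer valency -/
def nz (i : Fin 5) : ℤ := (X.c i i 0 : ℤ)

lemma nz_def (i : Fin 5) : X.nz i = (X.n i : ℤ) := rfl

lemma cz_nonneg (i j k : Fin 5) : 0 ≤ X.cz i j k := Int.ofNat_nonneg _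

/-- the linear combination of basis matrices with coefficients `a` -/
def sM (a : Fin 5 → ℤ) : Matrix V V ℤ := ∑ k, a k • X.M k

lemma sum_M' : ∑ k, X.M k = Matrix.of (fun _ _ => (1:ℤ)) := by
  rw [Fin.sum_univ_five]; exact X.sum_M

lemma entry_nonneg (i : Fin 5) (x y : V) : 0 ≤ X.M i x y := by
  rcases X.M_entries i x y with h | h <;> rw [h] <;> norm_num

lemma entries_sum (x y : V) : ∑ k, X.M k x y = 1 := by
  have h := congrFun (congrFun X.sum_M' x) y
  simpa [Matrix.sum_apply] using h

lemma M0_diag (x : V) : X.M 0 x x = 1 := by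
  rw [X.M_zero]; simp [Matrix.one_apply]

lemma entry_zero {k : Fin 5} {x y : V} (h : X.M k x y = 1) {l : Fin 5} (hl : l ≠ k) :
    X.M l x y = 0 := by
  have hs := X.entries_sum x y
  have he : ∑ m ∈ Finset.univ.erase k, X.M m x y = 0 := by
    have := Finset.sum_erase_add Finset.univ (fun m => X.M m x y) (Finset.mem_univ k)
    linarith [hs, h]
  exact (Finset.sum_eq_zero_iff_of_nonneg (fun m _ => X.entry_nonneg m x y)).1 he l
    (Finset.mem_erase.2 ⟨hl, Finset.mem_univ l⟩)

end HigmanianConfig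

namespace HigmanianConfig
variable {V : Type*} [Fintype V] [DecidableEq V] (X : HigmanianConfig V)

lemma exists_one (k : Fin 5) : ∃ x y, X.M k x y = 1 := by
  by_contra hcon
  push_neg at hcon
  apply X.M_ne_zero k
  ext x y
  rcases X.M_entries k x y with h | h
  · simpa using h
  · exact absurd h (hcon x y)

lemma diag_zero {k : Fin 5} (hk : k ≠ 0) (x : V) : X.M k x x = 0 :=
  X.entry_zero (X.M0_diag x) hk

lemma ext5 {a b : Fin 5 → ℤ} (h : X.sM a = X.sM b) : a = b := by
  funext k
  obtain ⟨x, y, hxy⟩ := X.exists_one k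
  have h' := congrFun (congrFun h x) y
  simp only [sM, Matrix.sum_apply, Matrix.smul_apply, smul_eq_mul] at h'
  rw [Finset.sum_eq_single k (fun l _ hl => by rw [X.entry_zero hxy hl, mul_zero])
      (fun hk => absurd (Finset.mem_univ k) hk),
    Finset.sum_eq_single k (fun l _ hl => by rw [X.entry_zero hxy hl, mul_zero])
      (fun hk => absurd (Finset.mem_univ k) hk), hxy, mul_one, mul_one] at h'
  exact h'

lemma sM_mul (a b : Fin 5 → ℤ) :
    X.sM a * X.sM b = X.sM (fun k => ∑ i, ∑ j, a i * b j * X.cz i j k) := by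
  unfold sM
  rw [Finset.sum_mul]
  have step : ∀ i : Fin 5, (a i • X.M i) * (∑ j, b j • X.M j)
      = ∑ k, (∑ j, a i * b j * X.cz i j k) • X.M k := by
    intro i
    rw [Finset.mul_sum]
    have : ∀ j : Fin 5, (a i • X.M i) * (b j • X.M j)
        = ∑ k, (a i * b j * X.cz i j k) • X.M k := by
      intro j
      rw [smul_mul_assoc, mul_smul_comm, X.mul_M i j, smul_smul, Finset.smul_sum]
      exact Finset.sum_congr rfl fun k _ => by rw [smul_smul]; rfl
    rw [Finset.sum_congr rfl fun j _ => this j, Finset.sum_comm]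
    exact Finset.sum_congr rfl fun k _ => by rw [Finset.sum_smul]
  rw [Finset.sum_congr rfl fun i _ => step i, Finset.sum_comm]
  exact Finset.sum_congr rfl fun k _ => by rw [Finset.sum_smul]

lemma M_eq (j : Fin 5) : X.M j = X.sM (fun k => if k = j then 1 else 0) := by
  unfold sM
  simp [ite_smul]

lemma one_eq : (1 : Matrix V V ℤ) = X.sM (fun k => if k = 0 then 1 else 0) := by
  rw [← X.M_zero]; exact X.M_eq 0

lemma J_eq : Matrix.of (fun _ _ => (1:ℤ)) = X.sM (fun _ => 1) := by
  rw [← X.sum_M']; unfold sM; simp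

lemma mul_M' (i j : Fin 5) : X.M i * X.M j = X.sM (X.cz i j) := X.mul_M i j

end HigmanianConfig

namespace HigmanianConfig
variable {V : Type*} [Fintype V] [DecidableEq V] (X : HigmanianConfig V)

lemma symm_entry (i : Fin 5) (x y : V) : X.M i y x = X.M i x y := by
  conv_lhs => rw [← X.M_symm i]
  rfl

lemma rowsum (i : Fin 5) (x : V) : ∑ y, X.M i x y = X.nz i := by
  have h := congrFun (congrFun (X.mul_M' i i) x) x
  simp only [Matrix.mul_apply, sM, Matrix.sum_apply, Matrix.smul_apply, smul_eq_mul] at h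
  have hl : ∑ y, X.M i x y * X.M i y x = ∑ y, X.M i x y := by
    refine Finset.sum_congr rfl fun y _ => ?_
    rw [X.symm_entry i x y]
    rcases X.M_entries i x y with h' | h' <;> rw [h'] <;> ring
  have hr : ∑ k, X.cz i i k * X.M k x x = X.nz i := by
    rw [Fin.sum_univ_five, X.M0_diag, X.diag_zero (by decide) x, X.diag_zero (by decide) x,
      X.diag_zero (by decide) x, X.diag_zero (by decide) x]
    simp [cz, nz]
  rw [hl] at h
  rw [h, hr]

lemma MJ (i : Fin 5) :
    X.M i * Matrix.of (fun _ _ => (1:ℤ)) = X.nz i • Matrix.of (fun _ _ => (1:ℤ)) := by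
  ext x y
  simp [Matrix.mul_apply, X.rowsum i x]

include X in
lemma card_posZ : 0 < (Fintype.card V : ℤ) := by
  have := X.nonempty
  exact_mod_cast Fintype.card_pos

lemma trace_M (k : Fin 5) :
    Matrix.trace (X.M k) = if k = 0 then (Fintype.card V : ℤ) else 0 := by
  by_cases h : k = 0
  · subst h; rw [X.M_zero]; simp
  · simp only [h, if_false, Matrix.trace]
    exact Finset.sum_eq_zero fun x _ => X.diag_zero h x

lemma trace_sM (a : Fin 5 → ℤ) : Matrix.trace (X.sM a) = a 0 * (Fintype.card V : ℤ) := by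
  unfold sM
  rw [Matrix.trace_sum]
  simp only [Matrix.trace_smul, trace_M, smul_eq_mul]
  rw [Fin.sum_univ_five]
  simp

lemma trace_mul2 (i j : Fin 5) :
    Matrix.trace (X.M i * X.M j) = X.cz i j 0 * (Fintype.card V : ℤ) := by
  rw [X.mul_M', X.trace_sM]

lemma diag0 {i j : Fin 5} (h : i ≠ j) : X.cz i j 0 = 0 := by
  have ht : Matrix.trace (X.M i * X.M j) = 0 := by
    simp only [Matrix.trace, Matrix.diag, Matrix.mul_apply]
    refine Finset.sum_eq_zero fun x _ => Finset.sum_eq_zero fun y _ => ?_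
    rcases X.M_entries i x y with h' | h'
    · rw [h', zero_mul]
    · rw [X.symm_entry j x y, X.entry_zero h' (Ne.symm h), mul_zero]
  rw [X.trace_mul2] at ht
  exact (mul_eq_zero.1 ht).resolve_right (by exact_mod_cast X.card_posZ.ne')

lemma nz_pos (k : Fin 5) : 0 < X.nz k := by
  obtain ⟨x, y, hxy⟩ := X.exists_one k
  have tnn : ∀ w z : V, 0 ≤ X.M k w z * X.M k z w := by
    intro w z
    rw [X.symm_entry k w z]
    exact mul_nonneg (X.entry_nonneg k w z) (X.entry_nonneg k w z)
  have hx : (1:ℤ) ≤ ∑ z, X.M k x z * X.M k z x := by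
    have := Finset.single_le_sum (f := fun z => X.M k x z * X.M k z x)
      (fun z _ => tnn x z) (Finset.mem_univ y)
    have this : X.M k x y * X.M k y x ≤ ∑ z, X.M k x z * X.M k z x := this
    rw [X.symm_entry k x y, hxy] at this
    linarith
  have h1 : (1:ℤ) ≤ Matrix.trace (X.M k * X.M k) := by
    simp only [Matrix.trace, Matrix.diag, Matrix.mul_apply]
    have := Finset.single_le_sum (f := fun w => ∑ z, X.M k w z * X.M k z w)
      (fun w _ => Finset.sum_nonneg fun z _ => tnn w z) (Finset.mem_univ x)
    linarith
  rw [X.trace_mul2] at h1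
  show 0 < X.cz k k 0
  nlinarith [X.card_posZ, X.cz_nonneg k k 0]

include X in
lemma nz0 : X.nz 0 = 1 := by
  have hne := X.nonempty
  obtain ⟨x⟩ := hne
  have h := X.rowsum 0 x
  rw [X.M_zero] at h
  simp [Matrix.one_apply] at h
  omega

lemma diag0' (k l : Fin 5) : X.cz k l 0 = if k = l then X.nz l else 0 := by
  by_cases h : k = l
  · subst h; simp [cz, nz]
  · simp [h, X.diag0 h]

lemma trace_sM_mulM (a : Fin 5 → ℤ) (l : Fin 5) :
    Matrix.trace (X.sM a * X.M l) = a l * X.nz l * (Fintype.card V : ℤ) := by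
  unfold sM
  rw [Finset.sum_mul, Matrix.trace_sum]
  have step : ∀ k : Fin 5, Matrix.trace ((a k • X.M k) * X.M l)
      = a k * (X.cz k l 0 * (Fintype.card V : ℤ)) := by
    intro k
    rw [smul_mul_assoc, Matrix.trace_smul, X.trace_mul2, smul_eq_mul]
  rw [Finset.sum_congr rfl fun k _ => step k,
    Finset.sum_eq_single l (fun k _ hk => by rw [X.diag0 hk, zero_mul, mul_zero])
      (fun hk => absurd (Finset.mem_univ l) hk)]
  have : X.cz l l 0 = X.nz l := rfl
  rw [this]; ring

lemma trace_mul3 (i j l : Fin 5) :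
    Matrix.trace (X.M i * X.M j * X.M l) = X.cz i j l * X.nz l * (Fintype.card V : ℤ) := by
  rw [X.mul_M' i j, X.trace_sM_mulM]

end HigmanianConfig

namespace HigmanianConfig
variable {V : Type*} [Fintype V] [DecidableEq V] (X : HigmanianConfig V)

lemma tri_cyc (i j l : Fin 5) : X.cz i j l * X.nz l = X.cz l i j * X.nz j := by
  have h : Matrix.trace (X.M i * X.M j * X.M l) = Matrix.trace (X.M l * X.M i * X.M j) :=
    Matrix.trace_mul_cycle (X.M i) (X.M j) (X.M l)
  rw [X.trace_mul3, X.trace_mul3] at h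
  exact mul_right_cancel₀ X.card_posZ.ne' h

lemma tri_tr (i j l : Fin 5) : X.cz i j l * X.nz l = X.cz l j i * X.nz i := by
  have h : Matrix.trace (X.M i * X.M j * X.M l) = Matrix.trace (X.M l * X.M j * X.M i) := by
    rw [← Matrix.trace_transpose (X.M i * X.M j * X.M l), Matrix.transpose_mul,
      Matrix.transpose_mul, X.M_symm, X.M_symm, X.M_symm, mul_assoc]
  rw [X.trace_mul3, X.trace_mul3] at h
  exact mul_right_cancel₀ X.card_posZ.ne' h

lemma sM_symm (a : Fin 5 → ℤ) : (X.sM a)ᵀ = X.sM a := by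
  unfold sM
  rw [Matrix.transpose_sum]
  exact Finset.sum_congr rfl fun k _ => by rw [Matrix.transpose_smul, X.M_symm]

lemma comm (i j : Fin 5) : X.cz i j = X.cz j i := by
  apply X.ext5
  rw [← X.mul_M', ← X.mul_M']
  calc X.M i * X.M j = (X.M j * X.M i)ᵀ := by
        rw [Matrix.transpose_mul, X.M_symm, X.M_symm]
    _ = ((X.sM (X.cz j i)))ᵀ := by rw [X.mul_M']
    _ = X.sM (X.cz j i) := X.sM_symm _
    _ = X.M j * X.M i := (X.mul_M' j i).symm

lemma czero (j k : Fin 5) : X.cz 0 j k = if j = k then 1 else 0 := by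
  have h : X.sM (X.cz 0 j) = X.sM (fun k => if k = j then 1 else 0) := by
    rw [← X.mul_M', X.M_zero, one_mul, X.M_eq]
  have := congrFun (X.ext5 h) k
  rw [this]
  by_cases hh : j = k
  · subst hh; simp
  · simp [hh, Ne.symm hh]

lemma czero' (j k : Fin 5) : X.cz j 0 k = if j = k then 1 else 0 := by
  rw [X.comm j 0]; exact X.czero j k

lemma sM_smul (z : ℤ) (a : Fin 5 → ℤ) : z • X.sM a = X.sM (fun k => z * a k) := by
  unfold sM
  rw [Finset.smul_sum]
  exact Finset.sum_congr rfl fun k _ => by rw [smul_smul]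

lemma colsum (i k : Fin 5) : ∑ j, X.cz i j k = X.nz i := by
  have hm : X.sM (fun m => if m = i then 1 else 0) * X.sM (fun _ => 1)
      = X.nz i • X.sM (fun _ => 1) := by
    rw [← X.M_eq, ← X.J_eq]; exact X.MJ i
  rw [X.sM_mul, X.sM_smul] at hm
  have h := congrFun (X.ext5 hm) k
  simp only [Fin.sum_univ_five] at h
  fin_cases i <;> simpa [Fin.sum_univ_five] using h

lemma rowsum2 (i j : Fin 5) : ∑ k, X.cz i j k * X.nz k = X.nz i * X.nz j := by
  have hm : X.sM (X.cz i j) * X.sM (fun _ => 1)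
      = (X.nz i * X.nz j) • X.sM (fun _ => 1) := by
    rw [← X.mul_M', ← X.J_eq, mul_assoc, X.MJ j, mul_smul_comm, X.MJ i, smul_smul, mul_comm]
  rw [X.sM_mul, X.sM_smul] at hm
  have h := congrFun (X.ext5 hm) 0
  simp only [mul_one] at h
  calc ∑ k, X.cz i j k * X.nz k = ∑ a, ∑ b, X.cz i j a * X.cz a b 0 := by
        refine Finset.sum_congr rfl fun a _ => ?_
        rw [← Finset.mul_sum, X.colsum a 0]
    _ = X.nz i * X.nz j := h

lemma assoc (i j l k : Fin 5) :
    ∑ m, X.cz i j m * X.cz m l k = ∑ m, X.cz j l m * X.cz i m k := by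
  have hm : X.sM (fun k => ∑ a, ∑ b, X.cz i j a * (if b = l then 1 else 0) * X.cz a b k)
      = X.sM (fun k => ∑ a, ∑ b, (if a = i then 1 else 0) * X.cz j l b * X.cz a b k) := by
    rw [← X.sM_mul, ← X.sM_mul, ← X.mul_M', ← X.mul_M', ← X.M_eq, ← X.M_eq, mul_assoc]
  have h := congrFun (X.ext5 hm) k
  simpa [mul_ite, ite_mul, mul_zero, zero_mul, mul_one, one_mul,
    Finset.sum_ite_eq, Finset.sum_ite_eq'] using h

end HigmanianConfig

namespace HigmanianConfig
variable {V : Type*} [Fintype V] [DecidableEq V] (X : HigmanianConfig V)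

lemma N0_eq : X.M 0 + X.M 1 = X.sM ![1,1,0,0,0] := by
  unfold sM; rw [Fin.sum_univ_five]; simp

lemma N1_eq : X.M 0 + X.M 1 + X.M 2 = X.sM ![1,1,1,0,0] := by
  unfold sM; rw [Fin.sum_univ_five]; simp

lemma nz1_cast : ((1 + X.c 1 1 0 : ℕ) : ℤ) = 1 + X.nz 1 := by
  push_cast; rfl

lemma nz12_cast : ((1 + X.c 1 1 0 + X.c 2 2 0 : ℕ) : ℤ) = 1 + X.nz 1 + X.nz 2 := by
  push_cast; rfl

lemma N0_sm : X.sM ![1,1,0,0,0] * X.sM ![1,1,0,0,0] = (1 + X.nz 1) • X.sM ![1,1,0,0,0] := by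
  rw [← X.N0_eq, ← X.nz1_cast]; exact X.N0_sq

lemma N1_sm : X.sM ![1,1,1,0,0] * X.sM ![1,1,1,0,0]
    = (1 + X.nz 1 + X.nz 2) • X.sM ![1,1,1,0,0] := by
  rw [← X.N1_eq, ← X.nz12_cast]; exact X.N1_sq

lemma exN0 (k : Fin 5) :
    ∑ a, ∑ b, (![1,1,0,0,0] : Fin 5 → ℤ) a * (![1,1,0,0,0] : Fin 5 → ℤ) b * X.cz a b k
      = (1 + X.nz 1) * (![1,1,0,0,0] : Fin 5 → ℤ) k := by
  have h := X.N0_sm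
  rw [X.sM_mul, X.sM_smul] at h
  exact congrFun (X.ext5 h) k

lemma c111e : X.cz 1 1 1 = X.nz 1 - 1 := by
  have h := X.exN0 1
  simp [Fin.sum_univ_five, X.czero, X.czero'] at h
  linarith

lemma c112e : X.cz 1 1 2 = 0 := by
  have h := X.exN0 2
  simp [Fin.sum_univ_five, X.czero, X.czero'] at h
  linarith

lemma c113e : X.cz 1 1 3 = 0 := by
  have h := X.exN0 3
  simp [Fin.sum_univ_five, X.czero, X.czero'] at h
  linarith

lemma c114e : X.cz 1 1 4 = 0 := by
  have h := X.exN0 4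
  simp [Fin.sum_univ_five, X.czero, X.czero'] at h
  linarith

end HigmanianConfig

namespace HigmanianConfig
variable {V : Type*} [Fintype V] [DecidableEq V] (X : HigmanianConfig V)

lemma V0_eq : X.M 2 + X.M 3 + X.M 4 = X.sM ![0,0,1,1,1] := by
  unfold sM; rw [Fin.sum_univ_five]; simp

lemma V1_eq : X.M 3 + X.M 4 = X.sM ![0,0,0,1,1] := by
  unfold sM; rw [Fin.sum_univ_five]; simp

lemma J_split0 : X.sM ![0,0,1,1,1] = Matrix.of (fun _ _ => (1:ℤ)) - X.sM ![1,1,0,0,0] := by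
  rw [← X.V0_eq, ← X.N0_eq, ← X.sum_M']
  rw [Fin.sum_univ_five]
  abel

lemma J_split1 : X.sM ![0,0,0,1,1] = Matrix.of (fun _ _ => (1:ℤ)) - X.sM ![1,1,1,0,0] := by
  rw [← X.V1_eq, ← X.N1_eq, ← X.sum_M']
  rw [Fin.sum_univ_five]
  abel

lemma N0J : X.sM ![1,1,0,0,0] * Matrix.of (fun _ _ => (1:ℤ))
    = (1 + X.nz 1) • Matrix.of (fun _ _ => (1:ℤ)) := by
  rw [← X.N0_eq, add_mul, X.MJ 0, X.MJ 1, X.nz0, add_smul, one_smul]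

lemma N1J : X.sM ![1,1,1,0,0] * Matrix.of (fun _ _ => (1:ℤ))
    = (1 + X.nz 1 + X.nz 2) • Matrix.of (fun _ _ => (1:ℤ)) := by
  rw [← X.N1_eq, add_mul, add_mul, X.MJ 0, X.MJ 1, X.MJ 2, X.nz0, add_smul, add_smul, one_smul]

lemma PJ0 : X.sM ![1,1,0,0,0] * X.sM ![0,0,1,1,1] = (1 + X.nz 1) • X.sM ![0,0,1,1,1] := by
  rw [X.J_split0, mul_sub, X.N0J, X.N0_sm, smul_sub]

lemma PJ1 : X.sM ![1,1,1,0,0] * X.sM ![0,0,0,1,1]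
    = (1 + X.nz 1 + X.nz 2) • X.sM ![0,0,0,1,1] := by
  rw [X.J_split1, mul_sub, X.N1J, X.N1_sm, smul_sub]

lemma exPJ0 (k : Fin 5) :
    ∑ a, ∑ b, (![1,1,0,0,0] : Fin 5 → ℤ) a * (![0,0,1,1,1] : Fin 5 → ℤ) b * X.cz a b k
      = (1 + X.nz 1) * (![0,0,1,1,1] : Fin 5 → ℤ) k := by
  have h := X.PJ0
  rw [X.sM_mul, X.sM_smul] at h
  exact congrFun (X.ext5 h) k

lemma exPJ1 (k : Fin 5) :
    ∑ a, ∑ b, (![1,1,1,0,0] : Fin 5 → ℤ) a * (![0,0,0,1,1] : Fin 5 → ℤ) b * X.cz a b k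
      = (1 + X.nz 1 + X.nz 2) * (![0,0,0,1,1] : Fin 5 → ℤ) k := by
  have h := X.PJ1
  rw [X.sM_mul, X.sM_smul] at h
  exact congrFun (X.ext5 h) k

lemma exN1 (k : Fin 5) :
    ∑ a, ∑ b, (![1,1,1,0,0] : Fin 5 → ℤ) a * (![1,1,1,0,0] : Fin 5 → ℤ) b * X.cz a b k
      = (1 + X.nz 1 + X.nz 2) * (![1,1,1,0,0] : Fin 5 → ℤ) k := by
  have h := X.N1_sm
  rw [X.sM_mul, X.sM_smul] at h
  exact congrFun (X.ext5 h) k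

-- zero facts from PJ1 (k = 0,1,2)
lemma c13le2 (k : Fin 5) (hk : k = 0 ∨ k = 1 ∨ k = 2) :
    X.cz 1 3 k = 0 ∧ X.cz 1 4 k = 0 ∧ X.cz 2 3 k = 0 ∧ X.cz 2 4 k = 0 := by
  have h := X.exPJ1 k
  have n1 := X.cz_nonneg 1 3 k
  have n2 := X.cz_nonneg 1 4 k
  have n3 := X.cz_nonneg 2 3 k
  have n4 := X.cz_nonneg 2 4 k
  rcases hk with rfl | rfl | rfl <;>
  · simp [Fin.sum_univ_five, X.czero, X.czero'] at h
    exact ⟨by linarith, by linarith, by linarith, by linarith⟩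

lemma c12le1 (k : Fin 5) (hk : k = 0 ∨ k = 1) : X.cz 1 2 k = 0 := by
  have h := X.exPJ0 k
  have h2 := X.c13le2 k (by tauto)
  have n1 := X.cz_nonneg 1 2 k
  obtain ⟨e1, e2, -, -⟩ := h2
  rcases hk with rfl | rfl <;>
  · simp [Fin.sum_univ_five, X.czero, X.czero'] at h
    linarith

lemma c122e : X.cz 1 2 2 = X.nz 1 := by
  have h := X.exPJ0 2
  have h2 := X.c13le2 2 (by tauto)
  simp [Fin.sum_univ_five, X.czero, X.czero'] at h
  linarith [h2.1, h2.2.1]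

lemma c133_143 : X.cz 1 3 3 + X.cz 1 4 3 = X.nz 1 := by
  have h := X.exPJ0 3
  have h2 : X.cz 1 2 3 = 0 ∧ X.cz 2 2 3 = 0 := by
    have h3 := X.exN1 3
    simp [Fin.sum_univ_five, X.czero, X.czero', X.c113e] at h3
    have e := congrFun (X.comm 2 1) 3
    constructor <;>
      linarith [X.cz_nonneg 1 2 3, X.cz_nonneg 2 2 3, X.cz_nonneg 2 1 3, e]
  simp [Fin.sum_univ_five, X.czero, X.czero'] at h
  linarith [h2.1]

lemma c134_144 : X.cz 1 3 4 + X.cz 1 4 4 = X.nz 1 := by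
  have h := X.exPJ0 4
  have h2 : X.cz 1 2 4 = 0 ∧ X.cz 2 2 4 = 0 := by
    have h3 := X.exN1 4
    simp [Fin.sum_univ_five, X.czero, X.czero', X.c114e] at h3
    have e := congrFun (X.comm 2 1) 4
    constructor <;>
      linarith [X.cz_nonneg 1 2 4, X.cz_nonneg 2 2 4, X.cz_nonneg 2 1 4, e]
  simp [Fin.sum_univ_five, X.czero, X.czero'] at h
  linarith [h2.1]

lemma c233_243 : X.cz 2 3 3 + X.cz 2 4 3 = X.nz 2 := by
  have h := X.exPJ1 3
  simp [Fin.sum_univ_five, X.czero, X.czero'] at h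
  linarith [X.c133_143]

lemma c234_244 : X.cz 2 3 4 + X.cz 2 4 4 = X.nz 2 := by
  have h := X.exPJ1 4
  simp [Fin.sum_univ_five, X.czero, X.czero'] at h
  linarith [X.c134_144]

lemma c223e : X.cz 2 2 3 = 0 := by
  have h3 := X.exN1 3
  simp [Fin.sum_univ_five, X.czero, X.czero', X.c113e] at h3
  have e := congrFun (X.comm 2 1) 3
  linarith [X.cz_nonneg 1 2 3, X.cz_nonneg 2 2 3, e]

lemma c224e : X.cz 2 2 4 = 0 := by
  have h3 := X.exN1 4
  simp [Fin.sum_univ_five, X.czero, X.czero', X.c114e] at h3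
  have e := congrFun (X.comm 2 1) 4
  linarith [X.cz_nonneg 1 2 4, X.cz_nonneg 2 2 4, e]

lemma c221e : X.cz 2 2 1 = X.nz 2 := by
  have h3 := X.exN1 1
  simp [Fin.sum_univ_five, X.czero, X.czero', X.c111e] at h3
  have e := congrFun (X.comm 2 1) 1
  linarith [X.c12le1 1 (by tauto), e]

lemma c222e : X.cz 2 2 2 = X.nz 2 - X.nz 1 - 1 := by
  have h3 := X.exN1 2
  simp [Fin.sum_univ_five, X.czero, X.czero', X.c112e] at h3
  have e := congrFun (X.comm 2 1) 2
  linarith [X.c122e, e]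

end HigmanianConfig

namespace HigmanianConfig
variable {V : Type*} [Fintype V] [DecidableEq V] (X : HigmanianConfig V)

lemma cz_nn (i : Fin 5) : X.cz i i 0 = X.nz i := rfl

lemma c133_ne : X.cz 1 3 3 ≠ X.nz 1 := by
  intro hp
  have hq : X.cz 1 3 4 = 0 := by
    have f := X.tri_tr 1 3 4
    have g := X.tri_cyc 4 3 1
    have L := X.c133_143
    have h143 : X.cz 1 4 3 = 0 := by rw [hp] at L; linarith
    have hz : X.cz 1 3 4 * X.nz 4 = 0 := by rw [f, g, h143, zero_mul]
    exact (mul_eq_zero.mp hz).resolve_right (X.nz_pos 4).ne'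
  have hM : X.M 1 * X.M 3 = X.nz 1 • X.M 3 := by
    rw [X.mul_M' 1 3]
    unfold sM
    rw [Fin.sum_univ_five, (X.c13le2 0 (by tauto)).1, (X.c13le2 1 (by tauto)).1,
      (X.c13le2 2 (by tauto)).1, hp, hq]
    simp
  refine X.radical 3 (by decide) {1} ⟨1, Finset.mem_singleton_self 1⟩ (by decide) ⟨?_, ?_⟩
  · have h := X.N0_sq
    rw [X.M_zero, X.nz1_cast] at h
    simpa [Finset.sum_singleton, nz] using h
  · rw [Finset.sum_singleton, Finset.sum_singleton, add_mul, one_mul, hM, add_smul, one_smul]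
    rfl

lemma a1c : X.cz 1 3 3 * X.cz 3 3 1 + X.cz 1 3 4 * X.cz 4 3 1
    = X.nz 3 + X.cz 3 3 1 * (X.nz 1 - 1) := by
  have h := X.assoc 1 3 3 1
  have z0 := X.c13le2 0 (by tauto)
  have z1 := X.c13le2 1 (by tauto)
  have z2 := X.c13le2 2 (by tauto)
  simp only [Fin.sum_univ_five] at h
  rw [z0.1, z1.1, z2.1, z1.2.1, X.c111e, X.c12le1 1 (by tauto), X.cz_nn] at h
  rw [X.czero' 1 1] at h
  simp at h
  linear_combination h

lemma a2c : X.cz 1 3 3 * X.cz 3 3 2 + X.cz 1 3 4 * X.cz 4 3 2 = X.cz 3 3 2 * X.nz 1 := by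
  have h := X.assoc 1 3 3 2
  have z0 := X.c13le2 0 (by tauto)
  have z1 := X.c13le2 1 (by tauto)
  have z2 := X.c13le2 2 (by tauto)
  simp only [Fin.sum_univ_five] at h
  rw [z0.1, z1.1, z2.1, z2.2.1, X.c112e, X.c122e] at h
  rw [X.czero' 1 2] at h
  simp at h
  linear_combination h

lemma r1c : X.nz 3 + X.cz 3 3 1 * X.nz 1 + X.cz 3 3 2 * X.nz 2 + X.cz 3 3 3 * X.nz 3
    + X.cz 3 3 4 * X.nz 4 = X.nz 3 * X.nz 3 := by
  have h := X.rowsum2 3 3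
  rw [Fin.sum_univ_five, X.cz_nn, X.nz0] at h
  linear_combination h

lemma r2c : X.nz 4 + X.cz 4 4 1 * X.nz 1 + X.cz 4 4 2 * X.nz 2 + X.cz 4 4 3 * X.nz 3
    + X.cz 4 4 4 * X.nz 4 = X.nz 4 * X.nz 4 := by
  have h := X.rowsum2 4 4
  rw [Fin.sum_univ_five, X.cz_nn, X.nz0] at h
  linear_combination h

lemma r3c : X.cz 3 4 1 * X.nz 1 + X.cz 3 4 2 * X.nz 2 + X.cz 3 4 3 * X.nz 3
    + X.cz 3 4 4 * X.nz 4 = X.nz 3 * X.nz 4 := by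
  have h := X.rowsum2 3 4
  rw [Fin.sum_univ_five, X.diag0 (by decide)] at h
  linear_combination h

lemma f1c : X.cz 1 3 4 * X.nz 4 = (X.nz 1 - X.cz 1 3 3) * X.nz 3 := by
  have h1 := X.tri_tr 1 3 4
  have h2 := X.tri_cyc 4 3 1
  have L := X.c133_143
  linear_combination h1 + h2 + X.nz 3 * L

lemma f2c : X.cz 2 3 4 * X.nz 4 = (X.nz 2 - X.cz 2 3 3) * X.nz 3 := by
  have h1 := X.tri_tr 2 3 4
  have h2 := X.tri_cyc 4 3 2
  have L := X.c233_243
  linear_combination h1 + h2 + X.nz 3 * L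

lemma g1c : X.cz 4 3 1 * X.nz 1 = (X.nz 1 - X.cz 1 3 3) * X.nz 3 := by
  have h2 := X.tri_cyc 4 3 1
  have L := X.c133_143
  linear_combination h2 + X.nz 3 * L

lemma g2c : X.cz 4 3 2 * X.nz 2 = (X.nz 2 - X.cz 2 3 3) * X.nz 3 := by
  have h2 := X.tri_cyc 4 3 2
  have L := X.c233_243
  linear_combination h2 + X.nz 3 * L

lemma e2c : X.cz 1 3 3 * (X.nz 3 + X.nz 4) = X.nz 1 * X.nz 3 - X.nz 4 := by
  have hfac : ((X.cz 1 3 3 - X.nz 1)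
      * (X.cz 1 3 3 * (X.nz 3 + X.nz 4) - X.nz 1 * X.nz 3 + X.nz 4)) * X.nz 3 = 0 := by
    linear_combination X.nz 1 * X.nz 4 * X.a1c
      - X.nz 4 * (X.cz 1 3 3 - X.nz 1 + 1) * X.tri_cyc 3 3 1
      - X.cz 1 3 4 * X.nz 4 * X.g1c - (X.nz 1 - X.cz 1 3 3) * X.nz 3 * X.f1c
  have h1 := (mul_eq_zero.mp hfac).resolve_right (X.nz_pos 3).ne'
  rcases mul_eq_zero.mp h1 with h | h
  · exact absurd (by linarith : X.cz 1 3 3 = X.nz 1) X.c133_ne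
  · linarith

lemma c133_ne' : X.nz 1 - X.cz 1 3 3 ≠ 0 := by
  intro h
  have h2 := X.e2c
  have := X.nz_pos 4
  nlinarith [X.nz_pos 3, X.nz_pos 1]

lemma e4c : X.cz 2 3 3 * (X.nz 3 + X.nz 4) = X.nz 2 * X.nz 3 := by
  have hfac : ((X.nz 1 - X.cz 1 3 3)
      * ((X.nz 2 - X.cz 2 3 3) * X.nz 3 - X.cz 2 3 3 * X.nz 4)) * X.nz 3 = 0 := by
    linear_combination X.nz 2 * X.nz 4 * X.a2c
      - X.nz 4 * (X.cz 1 3 3 - X.nz 1) * X.tri_cyc 3 3 2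
      - X.cz 1 3 4 * X.nz 4 * X.g2c - (X.nz 2 - X.cz 2 3 3) * X.nz 3 * X.f1c
  have h1 := (mul_eq_zero.mp hfac).resolve_right (X.nz_pos 3).ne'
  have h2 := (mul_eq_zero.mp h1).resolve_left X.c133_ne'
  linarith

lemma e5c : X.cz 1 3 4 * (X.nz 3 + X.nz 4) = (X.nz 1 + 1) * X.nz 3 := by
  have hfac : (X.cz 1 3 4 * (X.nz 3 + X.nz 4) - (X.nz 1 + 1) * X.nz 3) * X.nz 4 = 0 := by
    linear_combination (X.nz 3 + X.nz 4) * X.f1c - X.nz 3 * X.e2c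
  have h1 := (mul_eq_zero.mp hfac).resolve_right (X.nz_pos 4).ne'
  linarith

lemma e6c : X.cz 2 3 4 * (X.nz 3 + X.nz 4) = X.nz 2 * X.nz 3 := by
  have hfac : (X.cz 2 3 4 * (X.nz 3 + X.nz 4) - X.nz 2 * X.nz 3) * X.nz 4 = 0 := by
    linear_combination (X.nz 3 + X.nz 4) * X.f2c - X.nz 3 * X.e4c
  have h1 := (mul_eq_zero.mp hfac).resolve_right (X.nz_pos 4).ne'
  linarith

end HigmanianConfig

namespace HigmanianConfig
variable {V : Type*} [Fintype V] [DecidableEq V] (X : HigmanianConfig V)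

lemma t3c : X.cz 4 4 1 * X.nz 1 = (X.nz 1 - X.cz 1 3 4) * X.nz 4 := by
  have h := X.tri_cyc 4 4 1
  have L := X.c134_144
  linear_combination h + X.nz 4 * L

lemma t4c : X.cz 4 4 2 * X.nz 2 = (X.nz 2 - X.cz 2 3 4) * X.nz 4 := by
  have h := X.tri_cyc 4 4 2
  have L := X.c234_244
  linear_combination h + X.nz 4 * L

lemma g3c : X.cz 3 4 1 * X.nz 1 = (X.nz 1 - X.cz 1 3 3) * X.nz 3 := by
  have h := X.tri_tr 3 4 1
  have L := X.c133_143
  linear_combination h + X.nz 3 * L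

lemma g4c : X.cz 3 4 2 * X.nz 2 = (X.nz 2 - X.cz 2 3 3) * X.nz 3 := by
  have h := X.tri_tr 3 4 2
  have L := X.c233_243
  linear_combination h + X.nz 3 * L

lemma K1c : X.cz 3 3 1 * (X.nz 1 * (X.nz 3 + X.nz 4))
    = X.nz 3 * (X.nz 1 * X.nz 3 - X.nz 4) := by
  linear_combination (X.nz 3 + X.nz 4) * X.tri_cyc 3 3 1 + X.nz 3 * X.e2c

lemma K2c : X.cz 3 3 2 * (X.nz 3 + X.nz 4) = X.nz 3 * X.nz 3 := by
  have hfac : (X.cz 3 3 2 * (X.nz 3 + X.nz 4) - X.nz 3 * X.nz 3) * X.nz 2 = 0 := by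
    linear_combination (X.nz 3 + X.nz 4) * X.tri_cyc 3 3 2 + X.nz 3 * X.e4c
  have h1 := (mul_eq_zero.mp hfac).resolve_right (X.nz_pos 2).ne'
  linarith

lemma K3c : X.cz 4 4 1 * (X.nz 1 * (X.nz 3 + X.nz 4))
    = X.nz 4 * (X.nz 1 * X.nz 4 - X.nz 3) := by
  linear_combination (X.nz 3 + X.nz 4) * X.t3c - X.nz 4 * X.e5c

lemma K4c : X.cz 4 4 2 * (X.nz 3 + X.nz 4) = X.nz 4 * X.nz 4 := by
  have hfac : (X.cz 4 4 2 * (X.nz 3 + X.nz 4) - X.nz 4 * X.nz 4) * X.nz 2 = 0 := by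
    linear_combination (X.nz 3 + X.nz 4) * X.t4c - X.nz 4 * X.e6c
  have h1 := (mul_eq_zero.mp hfac).resolve_right (X.nz_pos 2).ne'
  linarith

lemma K9c (hcz : X.cz 3 3 3 = X.cz 3 3 4) :
    X.cz 3 3 3 * (X.nz 3 + X.nz 4) * (X.nz 3 + X.nz 4)
      = X.nz 3 * X.nz 3 * (X.nz 3 + X.nz 4) - X.nz 3 * (X.nz 3 + X.nz 4)
        - (X.nz 1 * X.nz 3 - X.nz 4) * X.nz 3 - X.nz 2 * X.nz 3 * X.nz 3 := by
  linear_combination (X.nz 3 + X.nz 4) * X.r1c - (X.nz 3 + X.nz 4) * X.tri_cyc 3 3 1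
    - X.nz 3 * X.e2c - (X.nz 3 + X.nz 4) * X.tri_cyc 3 3 2 - X.nz 3 * X.e4c
    + X.nz 4 * (X.nz 3 + X.nz 4) * hcz

lemma K10c (hcz : X.cz 3 3 3 = X.cz 3 3 4) :
    X.cz 4 4 3 * (X.nz 3 + X.nz 4) * (X.nz 3 + X.nz 4)
      = X.nz 4 * X.nz 4 * ((X.nz 3 + X.nz 4) - 1 - X.nz 1 - X.nz 2) := by
  have hfac : (X.cz 4 4 3 * (X.nz 3 + X.nz 4) * (X.nz 3 + X.nz 4)
      - X.nz 4 * X.nz 4 * ((X.nz 3 + X.nz 4) - 1 - X.nz 1 - X.nz 2)) * X.nz 3 = 0 := by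
    linear_combination (X.nz 3 + X.nz 4) * (X.nz 3 + X.nz 4) * X.r3c
      - (X.nz 3 + X.nz 4) * (X.nz 3 + X.nz 4) * X.g3c
      - (X.nz 3 + X.nz 4) * (X.nz 3 + X.nz 4) * X.g4c
      - (X.nz 3 + X.nz 4) * (X.nz 3 + X.nz 4) * X.tri_cyc 3 4 3
      - (X.nz 3 + X.nz 4) * (X.nz 3 + X.nz 4) * X.tri_tr 3 4 4
      + X.nz 3 * (X.nz 3 + X.nz 4) * X.e2c + X.nz 3 * (X.nz 3 + X.nz 4) * X.e4c
      + X.nz 4 * (X.nz 3 + X.nz 4) * (X.nz 3 + X.nz 4) * hcz - X.nz 4 * X.K9c hcz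
  have h1 := (mul_eq_zero.mp hfac).resolve_right (X.nz_pos 3).ne'
  linarith

lemma K11c (hcz : X.cz 3 3 3 = X.cz 3 3 4) : X.cz 4 4 4 = X.cz 4 4 3 := by
  have hS : (0:ℤ) < (X.nz 3 + X.nz 4) * (X.nz 3 + X.nz 4) := by
    have := X.nz_pos 3; have := X.nz_pos 4; positivity
  have hfac : ((X.cz 4 4 4 - X.cz 4 4 3) * X.nz 4) * ((X.nz 3 + X.nz 4) * (X.nz 3 + X.nz 4))
      = 0 := by
    linear_combination (X.nz 3 + X.nz 4) * (X.nz 3 + X.nz 4) * X.r2c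
      - (X.nz 3 + X.nz 4) * (X.nz 3 + X.nz 4) * X.t3c
      - (X.nz 3 + X.nz 4) * (X.nz 3 + X.nz 4) * X.t4c
      + X.nz 4 * (X.nz 3 + X.nz 4) * X.e5c + X.nz 4 * (X.nz 3 + X.nz 4) * X.e6c
      - X.nz 4 * X.K10c hcz - X.nz 3 * X.K10c hcz
  have h1 := (mul_eq_zero.mp hfac).resolve_right hS.ne'
  have h2 := (mul_eq_zero.mp h1).resolve_right (X.nz_pos 4).ne'
  linarith

end HigmanianConfig

namespace HigmanianConfig
variable {V : Type*} [Fintype V] [DecidableEq V] (X : HigmanianConfig V)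

lemma pair01 {i j : Fin 5} (hij : j ≠ i) (x y : V) :
    X.M i x y + X.M j x y = 0 ∨ X.M i x y + X.M j x y = 1 := by
  rcases X.M_entries i x y with h | h
  · rcases X.M_entries j x y with h' | h' <;> [left; right] <;> rw [h, h'] <;> ring
  · right; rw [h, X.entry_zero h hij]; norm_num

lemma cardV : (Fintype.card V : ℤ) = 1 + X.nz 1 + X.nz 2 + X.nz 3 + X.nz 4 := by
  obtain ⟨x⟩ := X.nonempty
  have h1 : (Fintype.card V : ℤ) = ∑ y : V, ∑ k : Fin 5, X.M k x y := by
    simp [X.entries_sum x]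
  rw [Finset.sum_comm] at h1
  rw [Finset.sum_congr rfl (fun k (_ : k ∈ Finset.univ) => X.rowsum k x),
    Fin.sum_univ_five, X.nz0] at h1
  exact h1

lemma N0_trans {x y z : V} (h1 : (X.M 0 + X.M 1) x y = 1) (h2 : (X.M 0 + X.M 1) y z = 1) :
    (X.M 0 + X.M 1) x z = 1 := by
  set N := X.M 0 + X.M 1 with hN
  have hsq := congrFun (congrFun X.N0_sq x) z
  have hnn : ∀ a b : V, 0 ≤ N a b := fun a b =>
    add_nonneg (X.entry_nonneg 0 a b) (X.entry_nonneg 1 a b)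
  have hle : (1:ℤ) ≤ (N * N) x z := by
    rw [Matrix.mul_apply]
    have := Finset.single_le_sum (f := fun w => N x w * N w z)
      (fun w _ => mul_nonneg (hnn x w) (hnn w z)) (Finset.mem_univ y)
    have this : N x y * N y z ≤ ∑ w, N x w * N w z := this
    rw [h1, h2] at this
    linarith
  rw [hsq, Matrix.smul_apply, smul_eq_mul] at hle
  rcases X.pair01 (i := 0) (j := 1) (by decide) x z with h | h
  · exfalso
    have hz : (X.M 0 + X.M 1) x z = 0 := by rw [Matrix.add_apply]; exact h
    rw [hz, mul_zero] at hle
    linarith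
  · show (X.M 0 + X.M 1) x z = 1
    rw [Matrix.add_apply]
    exact h

lemma N0_diag (x : V) : (X.M 0 + X.M 1) x x = 1 := by
  rw [Matrix.add_apply, X.M0_diag, X.diag_zero (by decide) x]
  norm_num

lemma N0_symm' (x y : V) : (X.M 0 + X.M 1) y x = (X.M 0 + X.M 1) x y := by
  rw [Matrix.add_apply, Matrix.add_apply, X.symm_entry 0 x y, X.symm_entry 1 x y]

lemma N0_rowsum (x : V) : ∑ y, (X.M 0 + X.M 1) x y = 1 + X.nz 1 := by
  simp only [Matrix.add_apply, Finset.sum_add_distrib, X.rowsum 0 x, X.rowsum 1 x, X.nz0]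

lemma card_div : ∃ m : ℕ, m * (1 + X.n 1) = Fintype.card V := by
  classical
  set N := X.M 0 + X.M 1 with hN
  set cls : V → Finset V := fun x => Finset.univ.filter (fun y => N x y = 1) with hcls
  have hmemcls : ∀ x y, y ∈ cls x ↔ N x y = 1 := by
    intro x y; simp [hcls]
  have hcard : ∀ x, ((cls x).card : ℤ) = 1 + X.nz 1 := by
    intro x
    rw [← X.N0_rowsum x]
    rw [Finset.card_filter]
    push_cast
    refine (Finset.sum_congr rfl fun y _ => ?_).symm
    rcases X.pair01 (i := 0) (j := 1) (by decide) x y with h | h <;>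
      rw [show N x y = X.M 0 x y + X.M 1 x y from rfl, h] <;> norm_num <;> exact h
  have hclseq : ∀ x y, N x y = 1 → cls x = cls y := by
    intro x y hxy
    ext z
    rw [hmemcls, hmemcls]
    constructor
    · intro hz
      exact X.N0_trans (by rw [X.N0_symm']; exact hxy) hz
    · intro hz
      exact X.N0_trans hxy hz
  have hfib : ∀ x, Finset.univ.filter (fun a => cls a = cls x) = cls x := by
    intro x
    ext a
    simp only [Finset.mem_filter, Finset.mem_univ, true_and, hmemcls]
    constructor
    · intro h
      have : a ∈ cls a := (hmemcls a a).2 (X.N0_diag a)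
      rw [h] at this
      exact (hmemcls x a).1 this
    · intro h
      exact (hclseq x a h).symm
  have htot := Finset.card_eq_sum_card_fiberwise
    (f := cls) (s := Finset.univ) (t := Finset.univ.image cls)
    (fun x _ => Finset.mem_image_of_mem cls (Finset.mem_univ x))
  refine ⟨(Finset.univ.image cls).card, ?_⟩
  have hcard' : ∀ x : V, (cls x).card = 1 + X.n 1 := by
    intro x
    have := hcard x
    have h2 : ((1 + X.n 1 : ℕ) : ℤ) = 1 + X.nz 1 := by push_cast; rfl
    omega
  have hsum : ∀ b ∈ Finset.univ.image cls,
      (Finset.univ.filter (fun a => cls a = b)).card = 1 + X.n 1 := by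
    intro b hb
    obtain ⟨x, -, rfl⟩ := Finset.mem_image.mp hb
    rw [hfib x, hcard' x]
  rw [Finset.sum_congr rfl hsum, Finset.sum_const, smul_eq_mul, Finset.card_univ] at htot
  exact htot.symm

end HigmanianConfig

namespace HigmanianConfig
variable {V : Type*} [Fintype V] [DecidableEq V] (X : HigmanianConfig V)

lemma cz_def (i j k : Fin 5) : X.cz i j k = (X.c i j k : ℤ) := rfl

end HigmanianConfig


/-- under `c(3,3,3) = c(3,3,4)` and Eq. (2) for a fixed `i ∈ {3,4}`, the matrix
`M2 + Mi` is the adjacency matrix of a divisible design graph with class matrix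
`N0 = M0 + M1` and the stated parameters. -/
theorem higmanian_fusion_ddg_eq2 {V : Type*} [Fintype V] [DecidableEq V]
    (X : HigmanianConfig V) (i j : Fin 5)
    (hij : (i = 3 ∧ j = 4) ∨ (i = 4 ∧ j = 3))
    (hc : X.c 3 3 3 = X.c 3 3 4)
    (heq : (X.n 2 : ℚ) / ((X.n 1 : ℚ) + 1) - 2 * (X.n i : ℚ) / (X.n j : ℚ) = 1) :
    ∃ l1 l2 m : ℕ,
      (l1 : ℚ) = (X.n 2 : ℚ)
          + (X.n i : ℚ) * ((X.n 1 : ℚ) * (X.n i : ℚ) - (X.n j : ℚ))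
            / ((X.n 1 : ℚ) * ((X.n 3 : ℚ) + (X.n 4 : ℚ))) ∧
      (l2 : ℚ) = (X.n 2 : ℚ) - (X.n 1 : ℚ) - 1
          + (X.n i : ℚ) ^ 2 / ((X.n 3 : ℚ) + (X.n 4 : ℚ)) ∧
      (m : ℚ) = 1 + ((X.n 2 : ℚ) + (X.n 3 : ℚ) + (X.n 4 : ℚ)) / (1 + (X.n 1 : ℚ)) ∧
      Fintype.card V = 1 + X.n 1 + X.n 2 + X.n 3 + X.n 4 ∧
      m * (1 + X.n 1) = Fintype.card V ∧
      (X.M 2 + X.M i)ᵀ = X.M 2 + X.M i ∧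
      (∀ x y, (X.M 2 + X.M i) x y = 0 ∨ (X.M 2 + X.M i) x y = 1) ∧
      (∀ x, (X.M 2 + X.M i) x x = 0) ∧
      (X.M 0 + X.M 1)ᵀ = X.M 0 + X.M 1 ∧
      (∀ x y, (X.M 0 + X.M 1) x y = 0 ∨ (X.M 0 + X.M 1) x y = 1) ∧
      (∀ x, (X.M 0 + X.M 1) x x = 1) ∧
      (X.M 0 + X.M 1) * (X.M 0 + X.M 1)
          = ((1 + X.n 1 : ℕ) : ℤ) • (X.M 0 + X.M 1) ∧
      (X.M 2 + X.M i) * (X.M 2 + X.M i)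
          = ((X.n 2 + X.n i : ℕ) : ℤ) • (1 : Matrix V V ℤ)
            + (l1 : ℤ) • ((X.M 0 + X.M 1) - 1)
            + (l2 : ℤ) • ((Matrix.of fun _ _ => (1 : ℤ)) - (X.M 0 + X.M 1)) := by
  have hcz : X.cz 3 3 3 = X.cz 3 3 4 := by
    rw [X.cz_def, X.cz_def]; exact_mod_cast hc
  obtain ⟨m, hm⟩ := X.card_div
  have hcard : Fintype.card V = 1 + X.n 1 + X.n 2 + X.n 3 + X.n 4 := by
    have h := X.cardV
    simp only [X.nz_def] at h
    exact_mod_cast h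
  have hn1 : (0:ℚ) < (X.n 1 : ℚ) := by
    have := X.nz_pos 1; rw [X.nz_def] at this; exact_mod_cast this
  have hn2 : (0:ℚ) < (X.n 2 : ℚ) := by
    have := X.nz_pos 2; rw [X.nz_def] at this; exact_mod_cast this
  have hn3 : (0:ℚ) < (X.n 3 : ℚ) := by
    have := X.nz_pos 3; rw [X.nz_def] at this; exact_mod_cast this
  have hn4 : (0:ℚ) < (X.n 4 : ℚ) := by
    have := X.nz_pos 4; rw [X.nz_def] at this; exact_mod_cast this
  have hmQ : (m:ℚ) = 1 + ((X.n 2:ℚ) + (X.n 3:ℚ) + (X.n 4:ℚ)) / (1 + (X.n 1:ℚ)) := by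
    have hZ : (m * (1 + X.n 1) : ℕ) = 1 + X.n 1 + X.n 2 + X.n 3 + X.n 4 := by rw [hm, hcard]
    have hQ : (m:ℚ) * (1 + (X.n 1:ℚ)) = 1 + (X.n 1:ℚ) + (X.n 2:ℚ) + (X.n 3:ℚ) + (X.n 4:ℚ) := by
      exact_mod_cast hZ
    have hd : (1:ℚ) + (X.n 1:ℚ) ≠ 0 := by positivity
    field_simp
    linear_combination hQ
  have hSpos : (0:ℤ) < (X.nz 3 + X.nz 4) := by
    have := X.nz_pos 3; have := X.nz_pos 4; linarith
  have hS2pos : (0:ℤ) < (X.nz 3 + X.nz 4) * (X.nz 3 + X.nz 4) := by positivity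
  rcases hij with ⟨rfl, rfl⟩ | ⟨rfl, rfl⟩
  · -- case i = 3, j = 4
    have heqZ : X.nz 2 * X.nz 4 = (X.nz 1 + 1) * (X.nz 4 + 2 * X.nz 3) := by
      have h4 : (X.n 4:ℚ) ≠ 0 := ne_of_gt hn4
      have h1 : (X.n 1:ℚ) + 1 ≠ 0 := by positivity
      have hq : (X.n 2:ℚ) * (X.n 4:ℚ) = ((X.n 1:ℚ)+1) * ((X.n 4:ℚ) + 2*(X.n 3:ℚ)) := by
        field_simp at heq
        linear_combination heq
      simp only [X.nz_def]
      exact_mod_cast hq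
    refine ⟨X.n 2 + X.c 3 3 1, X.c 2 2 2 + X.c 3 3 2, m, ?_, ?_, hmQ, hcard, hm, ?_, ?_, ?_,
      ?_, ?_, ?_, X.N0_sq, ?_⟩
    · -- l1 cast
      have hK : ((X.c 3 3 1 : ℚ)) * ((X.n 1:ℚ) * ((X.n 3:ℚ) + (X.n 4:ℚ)))
          = (X.n 3:ℚ) * ((X.n 1:ℚ) * (X.n 3:ℚ) - (X.n 4:ℚ)) := by
        have h := X.K1c
        simp only [X.cz_def, X.nz_def] at h
        exact_mod_cast h
      have hd : (X.n 1:ℚ) * ((X.n 3:ℚ) + (X.n 4:ℚ)) ≠ 0 := by positivity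
      push_cast
      field_simp
      linear_combination hK
    · -- l2 cast
      have hK : ((X.c 3 3 2 : ℚ)) * ((X.n 3:ℚ) + (X.n 4:ℚ)) = (X.n 3:ℚ) * (X.n 3:ℚ) := by
        have h := X.K2c
        simp only [X.cz_def, X.nz_def] at h
        exact_mod_cast h
      have hc2 : (X.c 2 2 2 : ℚ) = (X.n 2:ℚ) - (X.n 1:ℚ) - 1 := by
        have h := X.c222e
        simp only [X.cz_def, X.nz_def] at h
        exact_mod_cast h
      have hd : ((X.n 3:ℚ) + (X.n 4:ℚ)) ≠ 0 := by positivity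
      push_cast
      field_simp
      linear_combination ((X.n 3:ℚ) + (X.n 4:ℚ)) * hc2 + hK
    · rw [Matrix.transpose_add, X.M_symm, X.M_symm]
    · intro x y; exact X.pair01 (by decide) x y
    · intro x
      rw [Matrix.add_apply, X.diag_zero (by decide) x, X.diag_zero (by decide) x]
      norm_num
    · rw [Matrix.transpose_add, X.M_symm, X.M_symm]
    · intro x y; exact X.pair01 (by decide) x y
    · exact X.N0_diag
    · -- big identity
      have hA : X.M 2 + X.M 3 = X.sM ![0,0,1,1,0] := by
        unfold HigmanianConfig.sM; rw [Fin.sum_univ_five]; simp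
      have h1 : (X.M 0 + X.M 1) - 1 = X.M 1 := by rw [X.M_zero]; abel
      have h2 : (Matrix.of fun _ _ => (1:ℤ)) - (X.M 0 + X.M 1) = X.M 2 + X.M 3 + X.M 4 := by
        rw [← X.sum_M', Fin.sum_univ_five]; abel
      have hR : ((X.n 2 + X.n 3:ℕ):ℤ) • (1 : Matrix V V ℤ)
          + ((X.n 2 + X.c 3 3 1:ℕ):ℤ) • ((X.M 0 + X.M 1) - 1)
          + ((X.c 2 2 2 + X.c 3 3 2:ℕ):ℤ) • ((Matrix.of fun _ _ => (1:ℤ)) - (X.M 0 + X.M 1))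
          = X.sM ![X.nz 2 + X.nz 3, X.nz 2 + X.cz 3 3 1,
              X.cz 2 2 2 + X.cz 3 3 2, X.cz 2 2 2 + X.cz 3 3 2, X.cz 2 2 2 + X.cz 3 3 2] := by
        rw [h1, h2, ← X.M_zero]
        unfold HigmanianConfig.sM
        rw [Fin.sum_univ_five]
        simp only [Matrix.cons_val_zero, Matrix.cons_val_one, Matrix.head_cons,
          Matrix.cons_val_two, Matrix.tail_cons, Matrix.cons_val_three, Matrix.cons_val_four,
          X.cz_def, X.nz_def]
        push_cast
        simp only [add_smul, smul_add]
        abel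
      rw [hA, X.sM_mul, hR]
      refine congrArg X.sM (funext fun k => ?_)
      fin_cases k
      · simp [Fin.sum_univ_five]
        linear_combination X.diag0 (show (2:Fin 5) ≠ 3 by decide)
          + X.diag0 (show (3:Fin 5) ≠ 2 by decide) + X.cz_nn 2 + X.cz_nn 3
      · simp [Fin.sum_univ_five]
        linear_combination X.c221e + (X.c13le2 1 (by tauto)).2.2.1
          + congrFun (X.comm 3 2) 1 + (X.c13le2 1 (by tauto)).2.2.1
      · simp [Fin.sum_univ_five]
        linear_combination (X.c13le2 2 (by tauto)).2.2.1 + congrFun (X.comm 3 2) 2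
          + (X.c13le2 2 (by tauto)).2.2.1
      · simp [Fin.sum_univ_five]
        have hfac : (X.cz 2 2 3 + X.cz 2 3 3 + X.cz 3 2 3 + X.cz 3 3 3
            - (X.cz 2 2 2 + X.cz 3 3 2)) * ((X.nz 3 + X.nz 4) * (X.nz 3 + X.nz 4)) = 0 := by
          linear_combination (X.nz 3 + X.nz 4) * (X.nz 3 + X.nz 4) * X.c223e
            + (X.nz 3 + X.nz 4) * (X.nz 3 + X.nz 4) * congrFun (X.comm 3 2) 3
            - (X.nz 3 + X.nz 4) * (X.nz 3 + X.nz 4) * X.c222e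
            - (X.nz 3 + X.nz 4) * X.K2c + 2 * (X.nz 3 + X.nz 4) * X.e4c
            + X.K9c hcz - X.nz 4 * heqZ
        have h0 := (mul_eq_zero.mp hfac).resolve_right hS2pos.ne'
        linarith
      · simp [Fin.sum_univ_five]
        have hfac : (X.cz 2 2 4 + X.cz 2 3 4 + X.cz 3 2 4 + X.cz 3 3 4
            - (X.cz 2 2 2 + X.cz 3 3 2)) * ((X.nz 3 + X.nz 4) * (X.nz 3 + X.nz 4)) = 0 := by
          linear_combination (X.nz 3 + X.nz 4) * (X.nz 3 + X.nz 4) * X.c224e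
            + (X.nz 3 + X.nz 4) * (X.nz 3 + X.nz 4) * congrFun (X.comm 3 2) 4
            - (X.nz 3 + X.nz 4) * (X.nz 3 + X.nz 4) * X.c222e
            - (X.nz 3 + X.nz 4) * X.K2c + 2 * (X.nz 3 + X.nz 4) * X.e6c
            + X.K9c hcz - X.nz 4 * heqZ
            - (X.nz 3 + X.nz 4) * (X.nz 3 + X.nz 4) * hcz
        have h0 := (mul_eq_zero.mp hfac).resolve_right hS2pos.ne'
        linarith
  · -- case i = 4, j = 3
    have heqZ : X.nz 2 * X.nz 3 = (X.nz 1 + 1) * (X.nz 3 + 2 * X.nz 4) := by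
      have h3 : (X.n 3:ℚ) ≠ 0 := ne_of_gt hn3
      have h1 : (X.n 1:ℚ) + 1 ≠ 0 := by positivity
      have hq : (X.n 2:ℚ) * (X.n 3:ℚ) = ((X.n 1:ℚ)+1) * ((X.n 3:ℚ) + 2*(X.n 4:ℚ)) := by
        field_simp at heq
        linear_combination heq
      simp only [X.nz_def]
      exact_mod_cast hq
    refine ⟨X.n 2 + X.c 4 4 1, X.c 2 2 2 + X.c 4 4 2, m, ?_, ?_, hmQ, hcard, hm, ?_, ?_, ?_,
      ?_, ?_, ?_, X.N0_sq, ?_⟩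
    · -- l1 cast
      have hK : ((X.c 4 4 1 : ℚ)) * ((X.n 1:ℚ) * ((X.n 3:ℚ) + (X.n 4:ℚ)))
          = (X.n 4:ℚ) * ((X.n 1:ℚ) * (X.n 4:ℚ) - (X.n 3:ℚ)) := by
        have h := X.K3c
        simp only [X.cz_def, X.nz_def] at h
        exact_mod_cast h
      have hd : (X.n 1:ℚ) * ((X.n 3:ℚ) + (X.n 4:ℚ)) ≠ 0 := by positivity
      push_cast
      field_simp
      linear_combination hK
    · -- l2 cast
      have hK : ((X.c 4 4 2 : ℚ)) * ((X.n 3:ℚ) + (X.n 4:ℚ)) = (X.n 4:ℚ) * (X.n 4:ℚ) := by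
        have h := X.K4c
        simp only [X.cz_def, X.nz_def] at h
        exact_mod_cast h
      have hc2 : (X.c 2 2 2 : ℚ) = (X.n 2:ℚ) - (X.n 1:ℚ) - 1 := by
        have h := X.c222e
        simp only [X.cz_def, X.nz_def] at h
        exact_mod_cast h
      have hd : ((X.n 3:ℚ) + (X.n 4:ℚ)) ≠ 0 := by positivity
      push_cast
      field_simp
      linear_combination ((X.n 3:ℚ) + (X.n 4:ℚ)) * hc2 + hK
    · rw [Matrix.transpose_add, X.M_symm, X.M_symm]
    · intro x y; exact X.pair01 (by decide) x y
    · intro x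
      rw [Matrix.add_apply, X.diag_zero (by decide) x, X.diag_zero (by decide) x]
      norm_num
    · rw [Matrix.transpose_add, X.M_symm, X.M_symm]
    · intro x y; exact X.pair01 (by decide) x y
    · exact X.N0_diag
    · -- big identity
      have hA : X.M 2 + X.M 4 = X.sM ![0,0,1,0,1] := by
        unfold HigmanianConfig.sM; rw [Fin.sum_univ_five]; simp
      have h1 : (X.M 0 + X.M 1) - 1 = X.M 1 := by rw [X.M_zero]; abel
      have h2 : (Matrix.of fun _ _ => (1:ℤ)) - (X.M 0 + X.M 1) = X.M 2 + X.M 3 + X.M 4 := by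
        rw [← X.sum_M', Fin.sum_univ_five]; abel
      have hR : ((X.n 2 + X.n 4:ℕ):ℤ) • (1 : Matrix V V ℤ)
          + ((X.n 2 + X.c 4 4 1:ℕ):ℤ) • ((X.M 0 + X.M 1) - 1)
          + ((X.c 2 2 2 + X.c 4 4 2:ℕ):ℤ) • ((Matrix.of fun _ _ => (1:ℤ)) - (X.M 0 + X.M 1))
          = X.sM ![X.nz 2 + X.nz 4, X.nz 2 + X.cz 4 4 1,
              X.cz 2 2 2 + X.cz 4 4 2, X.cz 2 2 2 + X.cz 4 4 2, X.cz 2 2 2 + X.cz 4 4 2] := by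
        rw [h1, h2, ← X.M_zero]
        unfold HigmanianConfig.sM
        rw [Fin.sum_univ_five]
        simp only [Matrix.cons_val_zero, Matrix.cons_val_one, Matrix.head_cons,
          Matrix.cons_val_two, Matrix.tail_cons, Matrix.cons_val_three, Matrix.cons_val_four,
          X.cz_def, X.nz_def]
        push_cast
        simp only [add_smul, smul_add]
        abel
      rw [hA, X.sM_mul, hR]
      refine congrArg X.sM (funext fun k => ?_)
      fin_cases k
      · simp [Fin.sum_univ_five]
        linear_combination X.diag0 (show (2:Fin 5) ≠ 4 by decide)
          + X.diag0 (show (4:Fin 5) ≠ 2 by decide) + X.cz_nn 2 + X.cz_nn 4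
      · simp [Fin.sum_univ_five]
        linear_combination X.c221e + (X.c13le2 1 (by tauto)).2.2.2
          + congrFun (X.comm 4 2) 1 + (X.c13le2 1 (by tauto)).2.2.2
      · simp [Fin.sum_univ_five]
        linear_combination (X.c13le2 2 (by tauto)).2.2.2 + congrFun (X.comm 4 2) 2
          + (X.c13le2 2 (by tauto)).2.2.2
      · simp [Fin.sum_univ_five]
        have hfac : (X.cz 2 2 3 + X.cz 2 4 3 + X.cz 4 2 3 + X.cz 4 4 3
            - (X.cz 2 2 2 + X.cz 4 4 2)) * ((X.nz 3 + X.nz 4) * (X.nz 3 + X.nz 4)) = 0 := by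
          linear_combination (X.nz 3 + X.nz 4) * (X.nz 3 + X.nz 4) * X.c223e
            + (X.nz 3 + X.nz 4) * (X.nz 3 + X.nz 4) * congrFun (X.comm 4 2) 3
            - (X.nz 3 + X.nz 4) * (X.nz 3 + X.nz 4) * X.c222e
            - (X.nz 3 + X.nz 4) * X.K4c
            + 2 * (X.nz 3 + X.nz 4) * (X.nz 3 + X.nz 4) * X.c233_243
            - 2 * (X.nz 3 + X.nz 4) * X.e4c + X.K10c hcz
            + X.nz 4 * heqZ - (X.nz 3 + X.nz 4) * heqZ
        have h0 := (mul_eq_zero.mp hfac).resolve_right hS2pos.ne'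
        linarith
      · simp [Fin.sum_univ_five]
        have hfac : (X.cz 2 2 4 + X.cz 2 4 4 + X.cz 4 2 4 + X.cz 4 4 4
            - (X.cz 2 2 2 + X.cz 4 4 2)) * ((X.nz 3 + X.nz 4) * (X.nz 3 + X.nz 4)) = 0 := by
          linear_combination (X.nz 3 + X.nz 4) * (X.nz 3 + X.nz 4) * X.c224e
            + (X.nz 3 + X.nz 4) * (X.nz 3 + X.nz 4) * congrFun (X.comm 4 2) 4
            - (X.nz 3 + X.nz 4) * (X.nz 3 + X.nz 4) * X.c222e
            - (X.nz 3 + X.nz 4) * X.K4c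
            + 2 * (X.nz 3 + X.nz 4) * (X.nz 3 + X.nz 4) * X.c234_244
            - 2 * (X.nz 3 + X.nz 4) * X.e6c + X.K10c hcz
            + X.nz 4 * heqZ - (X.nz 3 + X.nz 4) * heqZ
            + (X.nz 3 + X.nz 4) * (X.nz 3 + X.nz 4) * X.K11c hcz
        have h0 := (mul_eq_zero.mp hfac).resolve_right hS2pos.ne'
        linarith
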